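/- Let (m_n) be a martingale with values in a finite-dimensional normed space whose increments are uniformly bounded: ‖m_{n+1} − m_n‖ ≤ C almost surely for all n. Then m_n / n → 0 almost surely as n → ∞. -/

import Mathlib

open MeasureTheory Filter Finset
open scoped ENNReal NNReal

/-- Kronecker-type lemma. -/
theorem kron {u : ℕ → ℝ} {L : ℝ}
    (h : Tendsto (fun n : ℕ => ∑ k ∈ range n, ((k : ℝ) + 1)⁻¹ * u k) atTop (nhds L)) :
    Tendsto (fun n : ℕ => (n : ℝ)⁻¹ * ∑ k ∈ range n, u k) atTop (nhds 0) := by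
  set b : ℕ → ℝ := fun n => ∑ k ∈ range n, ((k : ℝ) + 1)⁻¹ * u k with hb
  have habel : ∀ n : ℕ, ∑ k ∈ range n, u k = n * b n - ∑ k ∈ range n, b k := by
    intro n
    induction n with
    | zero => simp
    | succ n ih =>
      have hu : u n = ((n : ℝ) + 1) * (b (n + 1) - b n) := by
        have : b (n + 1) = b n + ((n : ℝ) + 1)⁻¹ * u n := by
          simp [hb, Finset.sum_range_succ]
        rw [this]
        field_simp
        ring
      rw [Finset.sum_range_succ, Finset.sum_range_succ, ih, hu]
      push_cast
      ring
  have hc : Tendsto (fun n : ℕ => (n : ℝ)⁻¹ * ∑ k ∈ range n, b k) atTop (nhds L) := h.cesaro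
  have h2 : Tendsto (fun n : ℕ => b n - (n : ℝ)⁻¹ * ∑ k ∈ range n, b k) atTop (nhds (L - L)) :=
    h.sub hc
  rw [sub_self] at h2
  refine h2.congr' ?_
  filter_upwards [eventually_ge_atTop 1] with n hn
  have hn' : (n : ℝ) ≠ 0 := by positivity
  rw [habel n, mul_sub, ← mul_assoc, inv_mul_cancel₀ hn', one_mul]
theorem condexp_clm {α E F : Type*} {m m0 : MeasurableSpace α} {μ : Measure α}
    [IsFiniteMeasure μ] (hm : m ≤ m0)
    [NormedAddCommGroup E] [NormedSpace ℝ E] [CompleteSpace E]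
    [NormedAddCommGroup F] [NormedSpace ℝ F] [CompleteSpace F]
    (L : E →L[ℝ] F) {f : α → E} (hf : Integrable f μ) :
    μ[fun ω => L (f ω)|m] =ᵐ[μ] fun ω => L ((μ[f|m]) ω) := by
  refine (ae_eq_condExp_of_forall_setIntegral_eq hm (L.integrable_comp hf)
    (fun s _ _ => (L.integrable_comp integrable_condExp).integrableOn)
    (fun s hs hμs => ?_) ?_).symm
  · rw [ContinuousLinearMap.integral_comp_comm L integrable_condExp.integrableOn,
      ContinuousLinearMap.integral_comp_comm L hf.integrableOn,
      setIntegral_condExp hm hf hs]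
  · exact StronglyMeasurable.aestronglyMeasurable
      (L.continuous.comp_stronglyMeasurable stronglyMeasurable_condExp)

theorem mart_coord {Ω : Type*} {m0 : MeasurableSpace Ω} {μ : Measure Ω}
    [IsProbabilityMeasure μ] {ℱ : Filtration ℕ m0} {d : ℕ}
    {f : ℕ → Ω → EuclideanSpace ℝ (Fin d)} (hf : Martingale f ℱ μ) (i : Fin d) :
    Martingale (fun n ω => f n ω i) ℱ μ := by
  refine ⟨fun n => (EuclideanSpace.proj i).continuous.comp_stronglyMeasurable (hf.stronglyAdapted n), ?_⟩
  intro n m hnm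
  have h1 : μ[fun ω => (EuclideanSpace.proj (𝕜 := ℝ) i) (f m ω)|ℱ n] =ᵐ[μ]
      fun ω => (EuclideanSpace.proj (𝕜 := ℝ) i) ((μ[f m|ℱ n]) ω) :=
    condexp_clm (ℱ.le n) _ (hf.integrable m)
  refine h1.trans ?_
  filter_upwards [hf.2 n m hnm] with ω hω
  simp [hω]

theorem mart_lln_real {Ω : Type*} {m0 : MeasurableSpace Ω} {μ : Measure Ω}
    [IsProbabilityMeasure μ] {ℱ : Filtration ℕ m0} {g : ℕ → Ω → ℝ}
    (hg : Martingale g ℱ μ) {C : ℝ}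
    (hC : ∀ n : ℕ, ∀ᵐ ω ∂μ, |g (n + 1) ω - g n ω| ≤ C) :
    ∀ᵐ ω ∂μ, Tendsto (fun n : ℕ => (n : ℝ)⁻¹ * g n ω) atTop (nhds 0) := by
  -- the increments
  set dd : ℕ → Ω → ℝ := fun n ω => g (n + 1) ω - g n ω with hdd
  have hd_int : ∀ n, Integrable (dd n) μ := fun n => (hg.integrable _).sub (hg.integrable _)
  have hd_meas : ∀ n, StronglyMeasurable[ℱ (n + 1)] (dd n) := fun n =>
    (hg.stronglyAdapted (n + 1)).sub ((hg.stronglyAdapted n).mono (ℱ.mono n.le_succ))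
  have hd_cond : ∀ n, (μ[dd n|ℱ n]) =ᵐ[μ] 0 := by
    intro n
    have e := condExp_of_stronglyMeasurable (ℱ.le n) (hg.stronglyAdapted n) (hg.integrable n)
    refine (condExp_sub (hg.integrable _) (hg.integrable _) (ℱ n)).trans ?_
    filter_upwards [hg.2 n (n + 1) n.le_succ] with ω h1
    simp [Pi.sub_apply, h1, congrFun e ω]
  -- the rescaled martingale
  set h : ℕ → Ω → ℝ := fun n ω => ∑ k ∈ range n, ((k : ℝ) + 1)⁻¹ * dd k ω with hh
  have hh_adp : StronglyAdapted ℱ h := by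
    intro n
    refine Finset.stronglyMeasurable_fun_sum _ fun k hk => ?_
    exact (((hd_meas k).mono (ℱ.mono (Finset.mem_range.mp hk))).const_mul _)
  have hh_int : ∀ n, Integrable (h n) μ := fun n =>
    integrable_finset_sum _ fun k _ => (hd_int k).const_mul _
  have hh_mart : Martingale h ℱ μ := by
    refine martingale_nat hh_adp hh_int fun n => ?_
    have hsplit : h (n + 1) = h n + (((n : ℝ) + 1)⁻¹ • dd n) := by
      funext ω; simp [hh, Finset.sum_range_succ]
    rw [hsplit]
    refine EventuallyEq.symm ?_
    refine (condExp_add (hh_int n) ((hd_int n).smul _) (ℱ n)).trans ?_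
    have e1 : μ[h n|ℱ n] = h n :=
      condExp_of_stronglyMeasurable (ℱ.le n) (hh_adp n) (hh_int n)
    have e2 : μ[(((n : ℝ) + 1)⁻¹ • dd n)|ℱ n] =ᵐ[μ] ((n : ℝ) + 1)⁻¹ • (μ[dd n|ℱ n]) :=
      condExp_smul _ _ _
    filter_upwards [e2, hd_cond n] with ω h2 h3
    simp [Pi.add_apply, congrFun e1 ω, h2, Pi.smul_apply, h3]
  -- basic bounds
  obtain ⟨ω₀, hω₀⟩ := (hC 0).exists
  have hC0 : 0 ≤ C := le_trans (abs_nonneg _) hω₀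
  have hhb : ∀ n, ∀ᵐ ω ∂μ, |h n ω| ≤ ∑ k ∈ range n, ((k : ℝ) + 1)⁻¹ * C := by
    intro n
    filter_upwards [ae_all_iff.2 hC] with ω hω
    calc |h n ω| ≤ ∑ k ∈ range n, |((k : ℝ) + 1)⁻¹ * dd k ω| :=
          Finset.abs_sum_le_sum_abs _ _
      _ ≤ ∑ k ∈ range n, ((k : ℝ) + 1)⁻¹ * C := by
          refine Finset.sum_le_sum fun k _ => ?_
          rw [abs_mul, abs_of_nonneg (by positivity : (0:ℝ) ≤ ((k : ℝ) + 1)⁻¹)]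
          exact mul_le_mul_of_nonneg_left (hω k) (by positivity)
  have hh_aesm : ∀ n, AEStronglyMeasurable (h n) μ := fun n =>
    ((hh_adp n).mono (ℱ.le n)).aestronglyMeasurable
  have hh_mem2 : ∀ n, MemLp (h n) 2 μ := fun n =>
    (memLp_top_of_bound (hh_aesm n) _
      ((hhb n).mono fun ω hω => by rwa [Real.norm_eq_abs])).mono_exponent le_top
  have hmul_int : ∀ n, Integrable (h n * dd n) μ := fun n =>
    (hd_int n).bdd_mul (hh_aesm n) ((hhb n).mono fun ω hω => by rwa [Real.norm_eq_abs])
  -- cross terms vanish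
  have hcross : ∀ n, ∫ ω, h n ω * dd n ω ∂μ = 0 := by
    intro n
    have hpull : μ[h n * dd n|ℱ n] =ᵐ[μ] h n * μ[dd n|ℱ n] :=
      condExp_mul_of_stronglyMeasurable_left (hh_adp n) (hmul_int n) (hd_int n)
    have hzero : μ[h n * dd n|ℱ n] =ᵐ[μ] 0 := by
      refine hpull.trans ?_
      filter_upwards [hd_cond n] with ω hω
      simp [Pi.mul_apply, hω]
    have h0 : ∫ ω, h n ω * dd n ω ∂μ = ∫ ω, (μ[h n * dd n|ℱ n]) ω ∂μ :=
      (integral_condExp (ℱ.le n)).symm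
    rw [h0, integral_congr_ae hzero]
    simp
  -- second moments of increments
  have hd_sq_int : ∀ n, Integrable (fun ω => dd n ω ^ 2) μ := by
    intro n
    have : Integrable (dd n * dd n) μ :=
      (hd_int n).bdd_mul (hd_int n).aestronglyMeasurable
        ((hC n).mono fun ω hω => by rwa [Real.norm_eq_abs])
    simpa [sq, Pi.mul_def] using this
  have hd_sq : ∀ n, ∫ ω, dd n ω ^ 2 ∂μ ≤ C ^ 2 := by
    intro n
    have hb : ∀ᵐ ω ∂μ, dd n ω ^ 2 ≤ C ^ 2 := (hC n).mono fun ω hω => by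
      rw [← sq_abs]; exact pow_le_pow_left₀ (abs_nonneg _) hω 2
    calc ∫ ω, dd n ω ^ 2 ∂μ ≤ ∫ _, C ^ 2 ∂μ :=
          integral_mono_ae (hd_sq_int n) (integrable_const _) hb
      _ = C ^ 2 := by simp
  -- variance bound
  have hvar : ∀ n, ∫ ω, h n ω ^ 2 ∂μ ≤ C ^ 2 * ∑ k ∈ range n, (((k : ℝ) + 1)⁻¹) ^ 2 := by
    intro n
    induction n with
    | zero => simp [hh]
    | succ n ih =>
      have hexp : ∀ ω, h (n + 1) ω ^ 2 = h n ω ^ 2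
          + (2 * ((n : ℝ) + 1)⁻¹) * (h n ω * dd n ω)
          + (((n : ℝ) + 1)⁻¹) ^ 2 * dd n ω ^ 2 := by
        intro ω; simp only [hh, Finset.sum_range_succ]; ring
      have hint1 : Integrable (fun ω => h n ω ^ 2) μ := (hh_mem2 n).integrable_sq
      have hint2 : Integrable (fun ω => (2 * ((n : ℝ) + 1)⁻¹) * (h n ω * dd n ω)) μ :=
        (hmul_int n).const_mul _
      have hint3 : Integrable (fun ω => (((n : ℝ) + 1)⁻¹) ^ 2 * dd n ω ^ 2) μ :=
        (hd_sq_int n).const_mul _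
      have heq : ∫ ω, h (n + 1) ω ^ 2 ∂μ = ∫ ω, h n ω ^ 2 ∂μ
          + (2 * ((n : ℝ) + 1)⁻¹) * ∫ ω, h n ω * dd n ω ∂μ
          + (((n : ℝ) + 1)⁻¹) ^ 2 * ∫ ω, dd n ω ^ 2 ∂μ := by
        calc ∫ ω, h (n + 1) ω ^ 2 ∂μ
            = ∫ ω, (h n ω ^ 2 + (2 * ((n : ℝ) + 1)⁻¹) * (h n ω * dd n ω))
                + (((n : ℝ) + 1)⁻¹) ^ 2 * dd n ω ^ 2 ∂μ :=
              integral_congr_ae (Filter.EventuallyEq.of_eq (funext fun ω => by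
                rw [hexp ω]))
          _ = (∫ ω, h n ω ^ 2 + (2 * ((n : ℝ) + 1)⁻¹) * (h n ω * dd n ω) ∂μ)
                + ∫ ω, (((n : ℝ) + 1)⁻¹) ^ 2 * dd n ω ^ 2 ∂μ :=
              integral_add (hint1.add hint2) hint3
          _ = ((∫ ω, h n ω ^ 2 ∂μ) + ∫ ω, (2 * ((n : ℝ) + 1)⁻¹) * (h n ω * dd n ω) ∂μ)
                + ∫ ω, (((n : ℝ) + 1)⁻¹) ^ 2 * dd n ω ^ 2 ∂μ := by
              rw [integral_add hint1 hint2]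
          _ = ∫ ω, h n ω ^ 2 ∂μ
                + (2 * ((n : ℝ) + 1)⁻¹) * ∫ ω, h n ω * dd n ω ∂μ
                + (((n : ℝ) + 1)⁻¹) ^ 2 * ∫ ω, dd n ω ^ 2 ∂μ := by
              rw [integral_const_mul, integral_const_mul]
      rw [heq, hcross n, mul_zero, add_zero, Finset.sum_range_succ, mul_add]
      have : (((n : ℝ) + 1)⁻¹) ^ 2 * ∫ ω, dd n ω ^ 2 ∂μ ≤ C ^ 2 * (((n : ℝ) + 1)⁻¹) ^ 2 := by
        rw [mul_comm (C ^ 2)]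
        exact mul_le_mul_of_nonneg_left (hd_sq n) (by positivity)
      linarith
  -- uniform L¹ bound
  obtain ⟨T, hT0, hT⟩ : ∃ T : ℝ, 0 ≤ T ∧ ∀ n, ∑ k ∈ range n, (((k : ℝ) + 1)⁻¹) ^ 2 ≤ T := by
    have hsummable : Summable (fun k : ℕ => (((k : ℝ) + 1)⁻¹) ^ 2) := by
      have h2 := (Real.summable_one_div_nat_pow (p := 2)).2 one_lt_two
      have h3 := (summable_nat_add_iff 1).2 h2
      refine h3.congr fun k => ?_
      push_cast
      rw [one_div, inv_pow]
    refine ⟨∑' k : ℕ, (((k : ℝ) + 1)⁻¹) ^ 2, tsum_nonneg fun k => by positivity,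
      fun n => Summable.sum_le_tsum _ (fun k _ => by positivity) hsummable⟩
  set R : ℝ≥0 := (Real.sqrt (C ^ 2 * T)).toNNReal with hRdef
  have hbdd : ∀ n, eLpNorm (h n) 1 μ ≤ R := by
    intro n
    refine (eLpNorm_le_eLpNorm_of_exponent_le one_le_two (hh_aesm n)).trans ?_
    rw [(hh_mem2 n).eLpNorm_eq_integral_rpow_norm two_ne_zero ENNReal.ofNat_ne_top]
    have hcoe : (R : ℝ≥0∞) = ENNReal.ofReal (Real.sqrt (C ^ 2 * T)) := rfl
    rw [hcoe]
    refine ENNReal.ofReal_le_ofReal ?_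
    have hnorm : ∀ ω, ‖h n ω‖ ^ (2 : ℝ≥0∞).toReal = h n ω ^ 2 := by
      intro ω
      rw [ENNReal.toReal_ofNat, Real.norm_eq_abs]
      norm_num [sq_abs]
    have hint_le : ∫ ω, ‖h n ω‖ ^ (2 : ℝ≥0∞).toReal ∂μ ≤ C ^ 2 * T := by
      rw [integral_congr_ae (Filter.EventuallyEq.of_eq (funext hnorm))]
      exact (hvar n).trans (mul_le_mul_of_nonneg_left (hT n) (by positivity))
    have hint_nonneg : 0 ≤ ∫ ω, ‖h n ω‖ ^ (2 : ℝ≥0∞).toReal ∂μ :=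
      integral_nonneg fun ω => by positivity
    rw [Real.sqrt_eq_rpow]
    calc (∫ ω, ‖h n ω‖ ^ (2 : ℝ≥0∞).toReal ∂μ) ^ ((2 : ℝ≥0∞).toReal)⁻¹
        = (∫ ω, ‖h n ω‖ ^ (2 : ℝ≥0∞).toReal ∂μ) ^ ((1 : ℝ)/2) := by
          rw [ENNReal.toReal_ofNat]; norm_num
      _ ≤ (C ^ 2 * T) ^ ((1 : ℝ)/2) :=
          Real.rpow_le_rpow hint_nonneg hint_le (by norm_num)
  -- convergence of h, then Kronecker
  have hconv := hh_mart.submartingale.exists_ae_tendsto_of_bdd hbdd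
  filter_upwards [hconv] with ω hω
  obtain ⟨c, hc⟩ := hω
  have hk := kron (u := fun k => dd k ω) hc
  have hsum : ∀ n, ∑ k ∈ range n, dd k ω = g n ω - g 0 ω := fun n =>
    Finset.sum_range_sub (fun k => g k ω) n
  have h0 : Tendsto (fun n : ℕ => (n : ℝ)⁻¹ * g 0 ω) atTop (nhds 0) := by
    simpa using tendsto_inv_atTop_nhds_zero_nat.mul_const (g 0 ω)
  have hfin := hk.add h0
  rw [add_zero] at hfin
  refine hfin.congr fun n => ?_
  rw [hsum]; ring

theorem coord_le_norm {d : ℕ} (x : EuclideanSpace ℝ (Fin d)) (i : Fin d) : |x i| ≤ ‖x‖ := by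
  rw [EuclideanSpace.norm_eq, ← Real.sqrt_sq_eq_abs]
  apply Real.sqrt_le_sqrt
  have := Finset.single_le_sum (f := fun j => ‖x j‖ ^ 2)
    (fun j _ => by positivity) (Finset.mem_univ i)
  simpa [Real.norm_eq_abs, sq_abs] using this

/-- Law of large numbers for martingales with uniformly bounded increments:
if `(m_n)` is a martingale with values in `ℝ^d` and `‖m_{n+1} − m_n‖ ≤ C`
almost surely for every `n`, then `m_n / n → 0` almost surely. -/
theorem stmt19 {Ω : Type*} {m0 : MeasurableSpace Ω} {μ : Measure Ω}
    [IsProbabilityMeasure μ] {ℱ : Filtration ℕ m0} {d : ℕ}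
    (f : ℕ → Ω → EuclideanSpace ℝ (Fin d))
    (hf : Martingale f ℱ μ) (C : ℝ)
    (hC : ∀ n : ℕ, ∀ᵐ ω ∂μ, ‖f (n + 1) ω - f n ω‖ ≤ C) :
    ∀ᵐ ω ∂μ, Tendsto (fun n : ℕ => (n : ℝ)⁻¹ • f n ω) atTop (nhds 0) := by
  have hcoord : ∀ i : Fin d, ∀ᵐ ω ∂μ,
      Tendsto (fun n : ℕ => (n : ℝ)⁻¹ * f n ω i) atTop (nhds 0) := by
    intro i
    refine mart_lln_real (mart_coord hf i) (C := C) fun n => ?_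
    filter_upwards [hC n] with ω hω
    calc |f (n + 1) ω i - f n ω i| = |(f (n + 1) ω - f n ω) i| := by
          simp [PiLp.sub_apply]
      _ ≤ ‖f (n + 1) ω - f n ω‖ := coord_le_norm _ i
      _ ≤ C := hω
  filter_upwards [ae_all_iff.2 hcoord] with ω hω
  have hpi : Tendsto (fun n : ℕ => fun i : Fin d => (n : ℝ)⁻¹ * f n ω i) atTop (nhds 0) :=
    tendsto_pi_nhds.2 fun i => by simpa using hω i
  set e := (EuclideanSpace.equiv (Fin d) ℝ).symm
  have h2 := (e.continuous.tendsto 0).comp hpi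
  rw [map_zero] at h2
  refine h2.congr fun n => ?_
  rfl
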